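/- With X, R, p, h, E, E^β as above, if μ is a Borel probability measure such that sup_{β ≥ 0} ∫_X E^β(1) dμ < ∞, then the support of μ is contained in M_h^R = {x : ∀y, (x,y)∈R → h(x) ≤ h(y)}. -/

import Mathlib

open MeasureTheory Set

lemma fiber_eq_preimage' {X : Type*} (s : Setoid X) (x : X) :
    {y : X | s.r y x} = Quotient.mk s ⁻¹' {Quotient.mk s x} := by
  ext y
  simp only [Set.mem_setOf_eq, Set.mem_preimage, Set.mem_singleton_iff]
  exact ⟨fun hr => Quotient.sound hr, fun hr => Quotient.exact hr⟩

lemma fiberSum_continuous' {X : Type*} [TopologicalSpace X] (s : Setoid X)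
    (hcover : IsCoveringMap (Quotient.mk s))
    (hfin : ∀ x : X, {y : X | s.r y x}.Finite)
    (q : X → ℝ) (hq : Continuous q) :
    Continuous (fun x => ∑ᶠ y ∈ {y : X | s.r y x}, q y) := by
  rw [continuous_iff_continuousAt]
  intro x
  have hcx := hcover (Quotient.mk s x)
  haveI : Nonempty (Quotient.mk s ⁻¹' {Quotient.mk s x}) := ⟨⟨x, rfl⟩⟩
  have hdisc := hcx.discreteTopology_fiber
  set t := hcx.toTrivialization
  have hxt : Quotient.mk s x ∈ t.baseSet := hcx.mem_toTrivialization_baseSet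
  haveI : Fintype (Quotient.mk s ⁻¹' {Quotient.mk s x}) :=
    ((fiber_eq_preimage' s x ▸ hfin x)).fintype
  set W : Set X := Quotient.mk s ⁻¹' t.baseSet with hW
  have hmkc : Continuous (Quotient.mk s) := continuous_quotient_mk'
  have hWopen : IsOpen W := t.open_baseSet.preimage hmkc
  have hxW : x ∈ W := hxt
  set g : X → ℝ := fun z => ∑ i : (Quotient.mk s ⁻¹' {Quotient.mk s x}),
    q (t.toOpenPartialHomeomorph.symm (Quotient.mk s z, i)) with hg
  have key : ∀ z ∈ W, (∑ᶠ y ∈ {y : X | s.r y z}, q y) = g z := by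
    intro z hz
    have hb : Quotient.mk s z ∈ t.baseSet := hz
    have himg : {y : X | s.r y z}
        = (fun i : (Quotient.mk s ⁻¹' {Quotient.mk s x}) =>
            t.toOpenPartialHomeomorph.symm (Quotient.mk s z, i)) '' Set.univ := by
      rw [fiber_eq_preimage' s z]
      ext y
      simp only [Set.mem_preimage, Set.mem_singleton_iff, Set.mem_image, Set.mem_univ,
        true_and]
      constructor
      · intro hy'
        have hsrc : y ∈ t.source := t.mem_source.mpr (hy' ▸ hb)
        refine ⟨(t y).2, ?_⟩
        rw [← hy']
        exact t.symm_apply_mk_proj hsrc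
      · rintro ⟨i, rfl⟩
        exact t.proj_symm_apply' hb
    have hinj : Set.InjOn (fun i : (Quotient.mk s ⁻¹' {Quotient.mk s x}) =>
        t.toOpenPartialHomeomorph.symm (Quotient.mk s z, i)) Set.univ := by
      intro i _ j _ hij
      have h2 : t (t.toOpenPartialHomeomorph.symm (Quotient.mk s z, i))
          = t (t.toOpenPartialHomeomorph.symm (Quotient.mk s z, j)) := congrArg _ hij
      rw [t.apply_symm_apply' hb, t.apply_symm_apply' hb] at h2
      exact (Prod.ext_iff.mp h2).2
    rw [himg, finsum_mem_image hinj, finsum_mem_univ, finsum_eq_sum_of_fintype]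
  have hgcont : ContinuousOn g W := by
    apply continuousOn_finset_sum
    intro i _
    have h1 : Continuous (fun z : X => (Quotient.mk s z, (i : (Quotient.mk s ⁻¹' {Quotient.mk s x})))) :=
      hmkc.prodMk continuous_const
    have h2 : ContinuousOn (fun z : X => t.toOpenPartialHomeomorph.symm
        (Quotient.mk s z, (i : (Quotient.mk s ⁻¹' {Quotient.mk s x})))) W := by
      apply t.toOpenPartialHomeomorph.continuousOn_symm.comp h1.continuousOn
      intro z hz
      rw [t.target_eq]
      exact ⟨hz, Set.mem_univ _⟩
    exact hq.comp_continuousOn h2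
  have hgx : ContinuousAt g x := hgcont.continuousAt (hWopen.mem_nhds hxW)
  exact hgx.congr ((Filter.eventuallyEq_of_mem (hWopen.mem_nhds hxW) key).symm)

/-- with `E^β(f) = h^β E(h^{-β} f)` as before, if a probability
measure `μ` satisfies `sup_{β ≥ 0} ∫ E^β(1) dμ < ∞`, then the support of `μ`
is contained in `M_h^R = {x | ∀ y, x ~ y → h x ≤ h y}`: every point outside
`M_h^R` has an open neighbourhood of `μ`-measure zero. -/
theorem stmt15 {X : Type*} [MetricSpace X] [CompactSpace X]
    [MeasurableSpace X] [BorelSpace X]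
    (s : Setoid X)
    (hcover : IsCoveringMap (Quotient.mk s))
    (hfin : ∀ x : X, {y : X | s.r y x}.Finite)
    (p : X → ℝ) (hpcont : Continuous p) (hppos : ∀ x, 0 < p x)
    (hpnorm : ∀ x : X, ∑ᶠ y ∈ {y : X | s.r y x}, p y = 1)
    (h : X → ℝ) (hhcont : Continuous h) (hhpos : ∀ x, 0 < h x)
    (μ : Measure X) [IsProbabilityMeasure μ]
    (K : ℝ)
    (hbound : ∀ β : ℝ, 0 ≤ β →
      ∫ x, (h x ^ β * ∑ᶠ y ∈ {y : X | s.r y x}, p y * h y ^ (-β)) ∂μ ≤ K) :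
    ∀ x : X, x ∉ {x : X | ∀ y : X, s.r x y → h x ≤ h y} →
      ∃ U : Set X, IsOpen U ∧ x ∈ U ∧ μ U = 0 := by
  intro x₀ hx₀
  simp only [Set.mem_setOf_eq, not_forall] at hx₀
  obtain ⟨y₀, hrel, hle⟩ := hx₀
  have hlt : h y₀ < h x₀ := lt_of_not_ge hle
  have hmkc : Continuous (Quotient.mk s) := continuous_quotient_mk'
  -- local section of the covering map near y₀
  obtain ⟨e, hy₀e, hfe⟩ := hcover.isLocalHomeomorph y₀
  set σ : X → X := fun z => e.symm (Quotient.mk s z) with hσ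
  have hmk₀ : Quotient.mk s x₀ = e y₀ := by
    rw [← hfe]; exact Quotient.sound hrel
  set W : Set X := Quotient.mk s ⁻¹' e.target with hWdef
  have hWopen : IsOpen W := e.open_target.preimage hmkc
  have hx₀W : x₀ ∈ W := by
    show Quotient.mk s x₀ ∈ e.target
    rw [hmk₀]; exact e.map_source hy₀e
  have hσrel : ∀ z ∈ W, s.r (σ z) z := by
    intro z hz
    have : Quotient.mk s (σ z) = Quotient.mk s z := by
      calc Quotient.mk s (σ z) = e (σ z) := congrFun hfe _
        _ = Quotient.mk s z := e.right_inv hz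
    exact Quotient.exact this
  have hσx₀ : σ x₀ = y₀ := by
    show e.symm (Quotient.mk s x₀) = y₀
    rw [hmk₀]; exact e.left_inv hy₀e
  have hσcont : ContinuousOn σ W := e.continuousOn_symm.comp hmkc.continuousOn (fun z hz => hz)
  -- choose constants
  set c : ℝ := (1 + h x₀ / h y₀) / 2 with hc
  have hr1 : 1 < h x₀ / h y₀ := (one_lt_div (hhpos y₀)).mpr hlt
  have hc1 : 1 < c := by rw [hc]; linarith
  have hcr : c < h x₀ / h y₀ := by rw [hc]; linarith
  set δ : ℝ := p y₀ / 2 with hδ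
  have hδpos : 0 < δ := by rw [hδ]; linarith [hppos y₀]
  -- the neighbourhood
  set U : Set X := W ∩ (fun z => (h z / h (σ z), p (σ z))) ⁻¹' (Set.Ioi c ×ˢ Set.Ioi δ)
    with hUdef
  have hUopen : IsOpen U := by
    apply ContinuousOn.isOpen_inter_preimage ?_ hWopen (isOpen_Ioi.prod isOpen_Ioi)
    exact ((hhcont.continuousOn.div (hhcont.comp_continuousOn hσcont)
      (fun z _ => (hhpos (σ z)).ne')).prodMk (hpcont.comp_continuousOn hσcont))
  have hx₀U : x₀ ∈ U := by
    refine ⟨hx₀W, ?_, ?_⟩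
    · show c < h x₀ / h (σ x₀); rw [hσx₀]; exact hcr
    · show δ < p (σ x₀); rw [hσx₀, hδ]; linarith [hppos y₀]
  refine ⟨U, hUopen, hx₀U, ?_⟩
  -- main estimate
  by_contra hμU
  have hμUfin : μ U ≠ ⊤ := measure_ne_top μ U
  set m : ℝ := (μ U).toReal with hm
  have hmpos : 0 < m := ENNReal.toReal_pos hμU hμUfin
  have hmain : ∀ β : ℝ, 0 ≤ β → δ * c ^ β * m ≤ K := by
    intro β hβ
    set F : X → ℝ := fun x => h x ^ β * ∑ᶠ y ∈ {y : X | s.r y x}, p y * h y ^ (-β) with hF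
    have hqcont : Continuous fun y => p y * h y ^ (-β) :=
      hpcont.mul (hhcont.rpow_const (fun y => Or.inl (hhpos y).ne'))
    have hFcont : Continuous F :=
      (hhcont.rpow_const (fun y => Or.inl (hhpos y).ne')).mul
        (fiberSum_continuous' s hcover hfin _ hqcont)
    have hFnonneg : ∀ x, 0 ≤ F x := by
      intro x
      apply mul_nonneg (Real.rpow_nonneg (hhpos x).le _)
      rw [finsum_mem_eq_finite_toFinset_sum _ (hfin x)]
      exact Finset.sum_nonneg fun i _ =>
        mul_nonneg (hppos i).le (Real.rpow_nonneg (hhpos i).le _)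
    have hFint : Integrable F μ :=
      integrableOn_univ.mp (hFcont.continuousOn.integrableOn_compact isCompact_univ)
    have hlow : ∀ x ∈ U, δ * c ^ β ≤ F x := by
      intro x hx
      obtain ⟨hxW, hxc, hxδ⟩ := hx
      have hrelx : s.r (σ x) x := hσrel x hxW
      have hmem : σ x ∈ (hfin x).toFinset := by
        rw [Set.Finite.mem_toFinset]; exact hrelx
      have hsum : p (σ x) * h (σ x) ^ (-β)
          ≤ ∑ᶠ y ∈ {y : X | s.r y x}, p y * h y ^ (-β) := by
        rw [finsum_mem_eq_finite_toFinset_sum _ (hfin x)]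
        exact Finset.single_le_sum (fun i _ =>
          mul_nonneg (hppos i).le (Real.rpow_nonneg (hhpos i).le _)) hmem
      have h1 : h x ^ β * (p (σ x) * h (σ x) ^ (-β)) ≤ F x :=
        mul_le_mul_of_nonneg_left hsum (Real.rpow_nonneg (hhpos x).le _)
      have heq : h x ^ β * (p (σ x) * h (σ x) ^ (-β))
          = p (σ x) * (h x / h (σ x)) ^ β := by
        rw [Real.rpow_neg (hhpos (σ x)).le, Real.div_rpow (hhpos x).le (hhpos (σ x)).le]
        ring
      have h2 : δ * c ^ β ≤ p (σ x) * (h x / h (σ x)) ^ β := by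
        apply mul_le_mul (le_of_lt hxδ)
          (Real.rpow_le_rpow (by linarith) (le_of_lt hxc) hβ)
          (Real.rpow_nonneg (by linarith) _) (hppos (σ x)).le
      calc δ * c ^ β ≤ p (σ x) * (h x / h (σ x)) ^ β := h2
        _ = h x ^ β * (p (σ x) * h (σ x) ^ (-β)) := heq.symm
        _ ≤ F x := h1
    have hset : δ * c ^ β * m ≤ ∫ x in U, F x ∂μ :=
      calc δ * c ^ β * m = δ * c ^ β * μ.real U := by
            rw [hm, measureReal_def]
        _ ≤ ∫ x in U, F x ∂μ :=
          setIntegral_ge_of_const_le_real hUopen.measurableSet hμUfin hlow hFint.integrableOn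
    have htot : ∫ x in U, F x ∂μ ≤ ∫ x, F x ∂μ :=
      setIntegral_le_integral hFint (Filter.Eventually.of_forall hFnonneg)
    exact le_trans hset (le_trans htot (hbound β hβ))
  -- contradiction: c^n grows without bound
  obtain ⟨n, hn⟩ := pow_unbounded_of_one_lt (K / (δ * m)) hc1
  have hKlt : K < δ * m * c ^ n := by
    have := (div_lt_iff₀ (by positivity : (0:ℝ) < δ * m)).mp hn
    linarith [this]
  have := hmain (n : ℝ) (Nat.cast_nonneg n)
  rw [Real.rpow_natCast] at this
  nlinarith [this]
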